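/- arXiv:1111.4977 — 6 statements merged into one kernel-verified Lean document; each statement's English description precedes it below -/
import Mathlib

section
/- Let A be a nonempty finite set in an abelian group and let D⁺ = {d ∈ A - A : n(d) ≥ |A|²/(2|A + A|)}, where n(d) is the number of representations of d as a difference of two elements of A. Then the energy supported on D⁺ satisfies ∑_{d ∈ D⁺} n(d)² ≥ |A|⁴/(2|A + A|). -/
open Finset Pointwise

/-- Number of representations of `d` as a difference of two elements of `A`. -/
def subRep {G : Type*} [AddCommGroup G] [DecidableEq G] (A : Finset G) (d : G) : ℕ :=
  ((A ×ˢ A).filter fun p => p.1 - p.2 = d).card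

open scoped Combinatorics.Additive

lemma sum_subRep_eq {G : Type*} [AddCommGroup G] [DecidableEq G] (A : Finset G) :
    ∑ d ∈ A - A, subRep A d = A.card ^ 2 := by
  rw [sq, ← card_product]
  exact (card_eq_sum_card_fiberwise (f := fun p : G × G => p.1 - p.2)
    (fun p hp => sub_mem_sub (mem_product.1 hp).1 (mem_product.1 hp).2)).symm

lemma addEnergy_eq_sum_subRep_sq {G : Type*} [AddCommGroup G] [DecidableEq G] (A : Finset G) :
    E[A] = ∑ d ∈ A - A, subRep A d ^ 2 := by
  rw [Finset.addEnergy, card_eq_sum_card_fiberwise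
    (f := fun x : (G × G) × G × G => x.1.1 - x.1.2) (t := A - A)
    (fun x hx => by
      have := (mem_filter.1 hx).1
      simp only [mem_product] at this
      exact sub_mem_sub this.1.1 this.1.2)]
  refine Finset.sum_congr rfl fun d hd => ?_
  rw [subRep, sq, ← card_product]
  apply Finset.card_nbij (fun x => ((x.1.1, x.1.2), (x.2.2, x.2.1)))
  · rintro ⟨⟨a1, a2⟩, b1, b2⟩ hx
    change ((a1, a2), b1, b2) ∈ ({x ∈ (A ×ˢ A) ×ˢ A ×ˢ A | x.1.1 + x.2.1 = x.1.2 + x.2.2}.filter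
      fun a => a.1.1 - a.1.2 = d) at hx
    change ((a1, a2), b2, b1) ∈ ({p ∈ A ×ˢ A | p.1 - p.2 = d} ×ˢ {p ∈ A ×ˢ A | p.1 - p.2 = d})
    simp only [mem_filter, mem_product] at hx ⊢
    obtain ⟨⟨⟨⟨ha1, ha2⟩, hb1, hb2⟩, heq⟩, hd'⟩ := hx
    refine ⟨⟨⟨ha1, ha2⟩, hd'⟩, ⟨hb2, hb1⟩, ?_⟩
    have h' : b2 - b1 = a1 - a2 := by
      rw [sub_eq_sub_iff_add_eq_add, add_comm b2 a2, add_comm a1 b1]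
      rw [add_comm b1 a1]; exact heq.symm
    rw [h', hd']
  · rintro ⟨⟨a1, a2⟩, b1, b2⟩ - ⟨⟨c1, c2⟩, d1, d2⟩ - h
    simp only [Prod.mk.injEq] at h
    obtain ⟨⟨h1, h2⟩, h3, h4⟩ := h
    simp [h1, h2, h3, h4]
  · rintro ⟨⟨a1, a2⟩, b1, b2⟩ hx
    simp only [Set.mem_image, mem_coe, mem_filter, mem_product] at hx ⊢
    obtain ⟨⟨⟨ha1, ha2⟩, hda⟩, ⟨hb1, hb2⟩, hdb⟩ := hx
    refine ⟨((a1, a2), (b2, b1)), ?_, rfl⟩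
    refine ⟨⟨⟨⟨ha1, ha2⟩, hb2, hb1⟩, ?_⟩, hda⟩
    have h' : a1 - a2 = b1 - b2 := by rw [hda, hdb]
    show a1 + b2 = a2 + b1
    rw [sub_eq_sub_iff_add_eq_add] at h'
    rw [h', add_comm]

theorem energy_on_popular_differences {G : Type*} [AddCommGroup G] [DecidableEq G]
    (A : Finset G) (hA : A.Nonempty) :
    (A.card : ℝ) ^ 4 / (2 * (A + A).card) ≤
      ∑ d ∈ (A - A).filter
          (fun d => (A.card : ℝ) ^ 2 / (2 * (A + A).card) ≤ (subRep A d : ℝ)),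
        (subRep A d : ℝ) ^ 2 := by
  set N : ℝ := (A.card : ℝ) with hN
  set K : ℝ := ((A + A).card : ℝ) with hK
  have hN0 : 0 < N := by positivity
  have hK0 : 0 < K := by
    have : (A + A).Nonempty := hA.add hA
    simp only [hK]
    exact_mod_cast this.card_pos
  set c : ℝ := N ^ 2 / (2 * K) with hc
  -- energy lower bound
  have hE : N ^ 4 ≤ K * ∑ d ∈ A - A, (subRep A d : ℝ) ^ 2 := by
    have h := Finset.le_card_add_mul_addEnergy A A
    rw [addEnergy_eq_sum_subRep_sq] at h
    have := (Nat.cast_le (α := ℝ)).2 h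
    push_cast at this
    calc N ^ 4 = N ^ 2 * N ^ 2 := by ring
    _ ≤ K * ∑ d ∈ A - A, (subRep A d : ℝ) ^ 2 := this
  -- total sum of subRep
  have hTot : ∑ d ∈ A - A, (subRep A d : ℝ) = N ^ 2 := by
    rw [hN]
    exact_mod_cast congrArg (Nat.cast (R := ℝ)) (sum_subRep_eq A)
  -- split
  have hsplit := Finset.sum_filter_add_sum_filter_not (A - A)
    (fun d => c ≤ (subRep A d : ℝ)) (fun d => (subRep A d : ℝ) ^ 2)
  have hunpop : ∑ d ∈ (A - A).filter (fun d => ¬ c ≤ (subRep A d : ℝ)),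
      (subRep A d : ℝ) ^ 2 ≤ c * N ^ 2 := by
    calc ∑ d ∈ (A - A).filter (fun d => ¬ c ≤ (subRep A d : ℝ)), (subRep A d : ℝ) ^ 2
        ≤ ∑ d ∈ (A - A).filter (fun d => ¬ c ≤ (subRep A d : ℝ)), c * (subRep A d : ℝ) := by
          refine Finset.sum_le_sum fun d hd => ?_
          have h1 : (subRep A d : ℝ) < c := lt_of_not_ge (mem_filter.1 hd).2
          have h2 : (0:ℝ) ≤ (subRep A d : ℝ) := Nat.cast_nonneg _
          nlinarith
      _ = c * ∑ d ∈ (A - A).filter (fun d => ¬ c ≤ (subRep A d : ℝ)), (subRep A d : ℝ) := by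
          rw [Finset.mul_sum]
      _ ≤ c * ∑ d ∈ A - A, (subRep A d : ℝ) := by
          refine mul_le_mul_of_nonneg_left ?_ (by positivity)
          exact Finset.sum_le_sum_of_subset_of_nonneg (filter_subset _ _)
            (fun _ _ _ => Nat.cast_nonneg _)
      _ = c * N ^ 2 := by rw [hTot]
  have hpop : ∑ d ∈ (A - A).filter (fun d => c ≤ (subRep A d : ℝ)), (subRep A d : ℝ) ^ 2
      ≥ (∑ d ∈ A - A, (subRep A d : ℝ) ^ 2) - c * N ^ 2 := by
    rw [← hsplit]
    linarith
  have hEdiv : N ^ 4 / K ≤ ∑ d ∈ A - A, (subRep A d : ℝ) ^ 2 :=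
    (div_le_iff₀ hK0).2 (by linarith [hE])
  have hcN : c * N ^ 2 = N ^ 4 / (2 * K) := by rw [hc]; field_simp
  have hhalf : N ^ 4 / K - N ^ 4 / (2 * K) = N ^ 4 / (2 * K) := by field_simp; ring
  linarith [hpop, hEdiv]
end

section
/- Let A be a finite nonempty set in an abelian group with E₃(A) > 0, and let D' be any subset of A - A. Then ∑_{d ∈ D'} |A_d| · |A - A_d| ≥ |A|² · (∑_{d ∈ D'} |A_d|^{3/2})² / E₃(A). -/
open Finset Pointwise

/-- Cubic energy of a finite set `A`. -/
def cubicEnergy {G : Type*} [AddCommGroup G] [DecidableEq G] (A : Finset G) : ℕ :=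
  (((A ×ˢ A) ×ˢ (A ×ˢ A) ×ˢ (A ×ˢ A)).filter fun x =>
    x.1.1 - x.1.2 = x.2.1.1 - x.2.1.2 ∧ x.2.1.1 - x.2.1.2 = x.2.2.1 - x.2.2.2).card

/-- Number of quadruples `(a, b, a', b') ∈ A × A_d × A × A_d` with `a - b = a' - b'`. -/
def quadCount {G : Type*} [AddCommGroup G] [DecidableEq G] (A : Finset G) (d : G) : ℕ :=
  (((A ×ˢ A.filter fun a => a + d ∈ A) ×ˢ (A ×ˢ A.filter fun a => a + d ∈ A)).filter
    fun pq => pq.1.1 - pq.1.2 = pq.2.1 - pq.2.2).card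

lemma step_a {G : Type*} [AddCommGroup G] [DecidableEq G] (A : Finset G) (d : G) :
    (A.card * (A.filter fun a => a + d ∈ A).card) ^ 2 ≤
      (A - A.filter fun a => a + d ∈ A).card * quadCount A d := by
  set Ad := A.filter fun a => a + d ∈ A with hAd
  set P : Finset (G × G) := A ×ˢ Ad with hP
  have hmem : ∀ p ∈ P, p.1 - p.2 ∈ A - Ad := by
    intro p hp
    rw [hP, mem_product] at hp
    exact sub_mem_sub hp.1 hp.2
  have hcard : P.card = ∑ x ∈ A - Ad, (P.filter fun p => p.1 - p.2 = x).card :=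
    card_eq_sum_card_fiberwise hmem
  have hQ : quadCount A d =
      ∑ x ∈ A - Ad, ((P.filter fun p => p.1 - p.2 = x).card) ^ 2 := by
    have h1 : quadCount A d =
        ∑ x ∈ A - Ad, (((P ×ˢ P).filter fun pq => pq.1.1 - pq.1.2 = pq.2.1 - pq.2.2).filter
          (fun pq => pq.1.1 - pq.1.2 = x)).card := by
      refine card_eq_sum_card_fiberwise ?_
      intro pq hpq
      rw [Finset.mem_coe, mem_filter, mem_product] at hpq
      exact hmem _ hpq.1.1
    rw [h1]
    refine Finset.sum_congr rfl fun x hx => ?_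
    have : (((P ×ˢ P).filter fun pq => pq.1.1 - pq.1.2 = pq.2.1 - pq.2.2).filter
          (fun pq => pq.1.1 - pq.1.2 = x)) =
        (P.filter fun p => p.1 - p.2 = x) ×ˢ (P.filter fun p => p.1 - p.2 = x) := by
      ext pq
      simp only [mem_filter, mem_product]
      constructor
      · rintro ⟨⟨⟨h1, h2⟩, h3⟩, h4⟩
        exact ⟨⟨h1, h4⟩, h2, h3 ▸ h4⟩
      · rintro ⟨⟨h1, h4⟩, h2, h3⟩
        exact ⟨⟨⟨h1, h2⟩, h4.trans h3.symm⟩, h4⟩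
    rw [this, card_product, sq]
  have hPcard : P.card = A.card * Ad.card := by rw [hP, card_product]
  calc (A.card * Ad.card) ^ 2 = (∑ x ∈ A - Ad, (P.filter fun p => p.1 - p.2 = x).card) ^ 2 := by
        rw [← hcard, hPcard]
    _ ≤ (A - Ad).card * ∑ x ∈ A - Ad, ((P.filter fun p => p.1 - p.2 = x).card) ^ 2 :=
        sq_sum_le_card_mul_sum_sq
    _ = (A - Ad).card * quadCount A d := by rw [hQ]

lemma step_b {G : Type*} [AddCommGroup G] [DecidableEq G] (A : Finset G) (D' : Finset G) :
    ∑ d ∈ D', quadCount A d ≤ cubicEnergy A := by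
  classical
  unfold quadCount
  rw [← Finset.card_sigma]
  refine Finset.card_le_card_of_injOn
    (fun x => ((x.2.1.1, x.2.2.1), (x.2.1.2, x.2.2.2), (x.2.1.2 + x.1, x.2.2.2 + x.1))) ?_ ?_
  · rintro ⟨d, ⟨a, b⟩, ⟨a', b'⟩⟩ hx
    simp only [Finset.mem_coe, Finset.mem_sigma, mem_filter, mem_product] at hx ⊢
    obtain ⟨-, ⟨⟨ha, hb, hbd⟩, ha', hb', hbd'⟩, heq⟩ := hx
    refine ⟨⟨⟨ha, ha'⟩, ⟨hb, hb'⟩, hbd, hbd'⟩, ?_, ?_⟩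
    · have h : a - b = a' - b' := heq
      rw [sub_eq_sub_iff_sub_eq_sub] at h
      exact h
    · abel
  · rintro ⟨d, ⟨a, b⟩, ⟨a', b'⟩⟩ hx ⟨e, ⟨c, f⟩, ⟨c', f'⟩⟩ hy h
    simp only [Prod.mk.injEq] at h
    obtain ⟨⟨h1, h2⟩, ⟨h3, h4⟩, h5, h6⟩ := h
    have hd : d = e := by
      have := h5
      rw [h3] at this
      exact add_left_cancel this
    subst hd h1 h2 h3 h4
    rfl

theorem sum_Ad_sub_lower_bound {G : Type*} [AddCommGroup G] [DecidableEq G]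
    (A : Finset G) (hA : A.Nonempty) (hE : 0 < cubicEnergy A)
    (D' : Finset G) (hD' : D' ⊆ A - A) :
    (A.card : ℝ) ^ 2 *
        (∑ d ∈ D', ((A.filter fun a => a + d ∈ A).card : ℝ) ^ ((3 : ℝ) / 2)) ^ 2 /
      (cubicEnergy A : ℝ) ≤
    ∑ d ∈ D', ((A.filter fun a => a + d ∈ A).card : ℝ) *
      ((A - A.filter fun a => a + d ∈ A).card : ℝ) := by
  classical
  set u : G → ℝ := fun d => ((A.filter fun a => a + d ∈ A).card : ℝ) with hu
  set S : G → ℝ := fun d => ((A - A.filter fun a => a + d ∈ A).card : ℝ) with hS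
  set Q : G → ℝ := fun d => (quadCount A d : ℝ) with hQ
  have hn : (0 : ℝ) < (A.card : ℝ) := by exact_mod_cast Finset.card_pos.2 hA
  have hEr : (0 : ℝ) < (cubicEnergy A : ℝ) := by exact_mod_cast hE
  have hu0 : ∀ d, 0 ≤ u d := fun d => Nat.cast_nonneg _
  have hS0 : ∀ d, 0 ≤ S d := fun d => Nat.cast_nonneg _
  have hQ0 : ∀ d, 0 ≤ Q d := fun d => Nat.cast_nonneg _
  -- if u d > 0 then S d > 0
  have hSpos : ∀ d, 0 < u d → 0 < S d := by
    intro d hud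
    have hud' : (0 : ℝ) < ((A.filter fun a => a + d ∈ A).card : ℝ) := hud
    have h1 : (A.filter fun a => a + d ∈ A).Nonempty := by
      rw [← Finset.card_pos]
      exact_mod_cast hud'
    have h2 : 0 < (A - A.filter fun a => a + d ∈ A).card :=
      Finset.card_pos.2 (hA.sub h1)
    show (0 : ℝ) < ((A - A.filter fun a => a + d ∈ A).card : ℝ)
    exact_mod_cast h2
  -- step a, cast to ℝ
  have hA' : ∀ d, (A.card : ℝ) ^ 2 * u d ^ 2 ≤ S d * Q d := by
    intro d
    have := step_a A d
    have h := (Nat.cast_le (α := ℝ)).2 this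
    push_cast at h
    calc (A.card : ℝ) ^ 2 * u d ^ 2 = ((A.card : ℝ) * u d) ^ 2 := by ring
      _ ≤ S d * Q d := h
  -- Cauchy-Schwarz
  have hCS : (∑ d ∈ D', u d ^ ((3 : ℝ) / 2)) ^ 2 ≤
      (∑ d ∈ D', u d * S d) * ∑ d ∈ D', u d ^ 2 / S d := by
    refine sum_sq_le_sum_mul_sum_of_sq_eq_mul D'
      (fun d _ => mul_nonneg (hu0 d) (hS0 d))
      (fun d _ => div_nonneg (sq_nonneg _) (hS0 d)) (fun d _ => ?_)
    rcases eq_or_lt_of_le (hu0 d) with h0 | h0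
    · rw [← h0]
      rw [Real.zero_rpow (by norm_num)]
      norm_num
    · have hSd := hSpos d h0
      have h1 : (u d ^ ((3 : ℝ) / 2)) ^ 2 = u d ^ (3 : ℕ) := by
        rw [← Real.rpow_natCast (u d ^ ((3 : ℝ) / 2)) 2, ← Real.rpow_mul (hu0 d)]
        rw [show (3 : ℝ) / 2 * ((2 : ℕ) : ℝ) = ((3 : ℕ) : ℝ) by norm_num]
        rw [Real.rpow_natCast]
      rw [h1]
      field_simp
      all_goals ring
  -- bound the second factor
  have hQle : ∑ d ∈ D', u d ^ 2 / S d ≤ (cubicEnergy A : ℝ) / (A.card : ℝ) ^ 2 := by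
    have h1 : ∀ d ∈ D', u d ^ 2 / S d ≤ Q d / (A.card : ℝ) ^ 2 := by
      intro d _
      rcases eq_or_lt_of_le (hu0 d) with h0 | h0
      · rw [← h0]
        have hz : (0 : ℝ) ^ 2 / S d = 0 := by simp
        rw [hz]
        positivity
      · have hSd := hSpos d h0
        rw [div_le_div_iff₀ hSd (by positivity)]
        calc u d ^ 2 * (A.card : ℝ) ^ 2 = (A.card : ℝ) ^ 2 * u d ^ 2 := by ring
          _ ≤ S d * Q d := hA' d
          _ = Q d * S d := by ring
    calc ∑ d ∈ D', u d ^ 2 / S d ≤ ∑ d ∈ D', Q d / (A.card : ℝ) ^ 2 :=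
          Finset.sum_le_sum h1
      _ = (∑ d ∈ D', Q d) / (A.card : ℝ) ^ 2 := by rw [Finset.sum_div]
      _ ≤ (cubicEnergy A : ℝ) / (A.card : ℝ) ^ 2 := by
          apply div_le_div_of_nonneg_right ?_ (by positivity)
          simp only [hQ]
          exact_mod_cast step_b A D'
  have hT0 : 0 ≤ ∑ d ∈ D', u d * S d :=
    Finset.sum_nonneg fun d _ => mul_nonneg (hu0 d) (hS0 d)
  have key : (∑ d ∈ D', u d ^ ((3 : ℝ) / 2)) ^ 2 ≤
      (∑ d ∈ D', u d * S d) * ((cubicEnergy A : ℝ) / (A.card : ℝ) ^ 2) := by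
    calc (∑ d ∈ D', u d ^ ((3 : ℝ) / 2)) ^ 2 ≤
        (∑ d ∈ D', u d * S d) * ∑ d ∈ D', u d ^ 2 / S d := hCS
      _ ≤ (∑ d ∈ D', u d * S d) * ((cubicEnergy A : ℝ) / (A.card : ℝ) ^ 2) :=
          mul_le_mul_of_nonneg_left hQle hT0
  rw [div_le_iff₀ hEr]
  calc (A.card : ℝ) ^ 2 * (∑ d ∈ D', u d ^ ((3 : ℝ) / 2)) ^ 2
      ≤ (A.card : ℝ) ^ 2 * ((∑ d ∈ D', u d * S d) * ((cubicEnergy A : ℝ) / (A.card : ℝ) ^ 2)) :=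
        mul_le_mul_of_nonneg_left key (by positivity)
    _ = (∑ d ∈ D', u d * S d) * (cubicEnergy A : ℝ) := by
        field_simp
end

section
/- Let A be a finite nonempty set in an abelian group with E₃(A) > 0, and let D' be any subset of A - A. Then ∑_{d ∈ D'} |A_d| · |A + A_d| ≥ |A|² · (∑_{d ∈ D'} |A_d|^{3/2})² / E₃(A). -/
open Finset Pointwise

lemma sum_energy_le_cubic {G : Type*} [AddCommGroup G] [DecidableEq G] (A D' : Finset G) :
    ∑ d ∈ D', Finset.addEnergy A (A.filter fun a => a + d ∈ A) ≤ cubicEnergy A := by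
  classical
  simp only [Finset.addEnergy]
  rw [← Finset.card_sigma]
  apply Finset.card_le_card_of_injOn
    (fun x => ((x.2.1.1, x.2.1.2), ((x.2.2.2, x.2.2.1), (x.2.2.2 + x.1, x.2.2.1 + x.1))))
  · rintro ⟨d, ⟨⟨a1, a2⟩, b1, b2⟩⟩ hx
    simp only [Finset.mem_coe, Finset.mem_sigma, Finset.mem_filter, Finset.mem_product] at hx ⊢
    obtain ⟨-, ⟨⟨ha1, ha2⟩, ⟨hb1, hb1d⟩, hb2, hb2d⟩, heq⟩ := hx
    refine ⟨⟨⟨ha1, ha2⟩, ⟨hb2, hb1⟩, hb2d, hb1d⟩, ?_, ?_⟩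
    · rw [sub_eq_sub_iff_add_eq_add, heq, add_comm]
    · rw [add_sub_add_right_eq_sub]
  · rintro ⟨d, ⟨⟨a1, a2⟩, b1, b2⟩⟩ hx ⟨d', ⟨⟨a1', a2'⟩, b1', b2'⟩⟩ hy h
    simp only [Prod.mk.injEq] at h
    obtain ⟨⟨h1, h2⟩, ⟨h3, h4⟩, h5, h6⟩ := h
    subst h1; subst h2; subst h3; subst h4
    have : d = d' := by
      have := h5; rwa [add_right_inj] at this
    subst this
    rfl

theorem sum_Ad_add_lower_bound {G : Type*} [AddCommGroup G] [DecidableEq G]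
    (A : Finset G) (hA : A.Nonempty) (hE : 0 < cubicEnergy A)
    (D' : Finset G) (hD' : D' ⊆ A - A) :
    (A.card : ℝ) ^ 2 *
        (∑ d ∈ D', ((A.filter fun a => a + d ∈ A).card : ℝ) ^ ((3 : ℝ) / 2)) ^ 2 /
      (cubicEnergy A : ℝ) ≤
    ∑ d ∈ D', ((A.filter fun a => a + d ∈ A).card : ℝ) *
      ((A + A.filter fun a => a + d ∈ A).card : ℝ) := by
  classical
  set n : ℝ := (A.card : ℝ) with hn
  have hE' : (0 : ℝ) < (cubicEnergy A : ℝ) := by exact_mod_cast hE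
  set r : G → ℝ := fun d => ((A.filter fun a => a + d ∈ A).card : ℝ) with hr
  set e : G → ℝ := fun d => ((Finset.addEnergy A (A.filter fun a => a + d ∈ A)) : ℝ) with he
  set K : G → ℝ := fun d => ((A + A.filter fun a => a + d ∈ A).card : ℝ) with hK
  have hr0 : ∀ d, 0 ≤ r d := fun d => Nat.cast_nonneg _
  have hK0 : ∀ d, 0 ≤ K d := fun d => Nat.cast_nonneg _
  have hepos : ∀ d ∈ D', 0 < e d := by
    intro d hd
    have hdsub := hD' hd
    rw [Finset.mem_sub] at hdsub
    obtain ⟨x, hx, y, hy, hxy⟩ := hdsub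
    have hne : (A.filter fun a => a + d ∈ A).Nonempty := by
      refine ⟨y, Finset.mem_filter.2 ⟨hy, ?_⟩⟩
      rw [← hxy]; simpa using hx
    have := Finset.addEnergy_pos hA hne
    simp only [he]
    exact_mod_cast this
  -- per-d Cauchy-Schwarz from mathlib
  have key : ∀ d ∈ D', n ^ 2 * r d ^ 2 ≤ K d * e d := by
    intro d hd
    have := Finset.le_card_add_mul_addEnergy A (A.filter fun a => a + d ∈ A)
    simp only [hn, hr, he, hK]
    exact_mod_cast this
  -- sum of energies bounded by cubic energy
  have hT : ∑ d ∈ D', e d ≤ (cubicEnergy A : ℝ) := by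
    have := sum_energy_le_cubic A D'
    calc ∑ d ∈ D', e d = ((∑ d ∈ D', Finset.addEnergy A (A.filter fun a => a + d ∈ A) : ℕ) : ℝ) := by
          push_cast; rfl
      _ ≤ (cubicEnergy A : ℝ) := by exact_mod_cast this
  have hT0 : 0 ≤ ∑ d ∈ D', e d := Finset.sum_nonneg fun d _ => Nat.cast_nonneg _
  -- Cauchy-Schwarz over the sum
  have hCS : (∑ d ∈ D', r d ^ ((3 : ℝ) / 2)) ^ 2 ≤
      (∑ d ∈ D', r d ^ 3 / e d) * ∑ d ∈ D', e d := by
    refine Finset.sum_sq_le_sum_mul_sum_of_sq_eq_mul D'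
      (fun d hd => by positivity) (fun d hd => (hepos d hd).le) ?_
    intro d hd
    have h1 : (r d ^ ((3 : ℝ) / 2)) ^ 2 = r d ^ 3 := by
      rw [← Real.rpow_natCast (r d) 3, ← Real.rpow_natCast (r d ^ ((3 : ℝ) / 2)) 2,
        ← Real.rpow_mul (hr0 d)]
      norm_num
    rw [h1, div_mul_cancel₀ _ (hepos d hd).ne']
  have hmain : n ^ 2 * ∑ d ∈ D', r d ^ 3 / e d ≤ ∑ d ∈ D', r d * K d := by
    rw [Finset.mul_sum]
    refine Finset.sum_le_sum fun d hd => ?_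
    rw [mul_div_assoc', div_le_iff₀ (hepos d hd)]
    calc n ^ 2 * r d ^ 3 = n ^ 2 * r d ^ 2 * r d := by ring
      _ ≤ K d * e d * r d := mul_le_mul_of_nonneg_right (key d hd) (hr0 d)
      _ = r d * K d * e d := by ring
  have hR0 : 0 ≤ ∑ d ∈ D', r d * K d :=
    Finset.sum_nonneg fun d _ => mul_nonneg (hr0 d) (hK0 d)
  rw [div_le_iff₀ hE']
  calc n ^ 2 * (∑ d ∈ D', r d ^ ((3 : ℝ) / 2)) ^ 2
      ≤ n ^ 2 * ((∑ d ∈ D', r d ^ 3 / e d) * ∑ d ∈ D', e d) :=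
        mul_le_mul_of_nonneg_left hCS (by positivity)
    _ = (n ^ 2 * ∑ d ∈ D', r d ^ 3 / e d) * ∑ d ∈ D', e d := by ring
    _ ≤ (∑ d ∈ D', r d * K d) * ∑ d ∈ D', e d := mul_le_mul_of_nonneg_right hmain hT0
    _ ≤ (∑ d ∈ D', r d * K d) * (cubicEnergy A : ℝ) := mul_le_mul_of_nonneg_left hT hR0
end

section
/- Let A be a finite nonempty set in an abelian group with E₃(A) > 0. Then E(A, A - A) ≥ c · |A|⁸ / (|A - A| · E₃(A)) for an absolute constant c > 0, where E(A, A-A) is the additive energy of A and A - A. -/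
open Finset Pointwise

/-- Additive energy of two finite sets in an abelian group. -/
def energyAdd {G : Type*} [AddCommGroup G] [DecidableEq G] (A B : Finset G) : ℕ :=
  (((A ×ˢ A) ×ˢ (B ×ˢ B)).filter fun x => x.1.1 - x.1.2 = x.2.1 - x.2.2).card

section AuxLemmas
variable {G : Type*} [AddCommGroup G] [DecidableEq G]

/-- number of representations of `x` as a difference of two elements of `A` -/
def nrep (A : Finset G) (x : G) : ℕ := ((A ×ˢ A).filter fun p => p.1 - p.2 = x).card

def tcnt (A : Finset G) (d : G × G) : ℕ := (A.filter fun a => a + d.1 ∈ A ∧ a + d.2 ∈ A).card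

def Tsum (A : Finset G) (x : G) : ℕ :=
  ∑ p ∈ ((A - A) ×ˢ (A - A)).filter fun p => p.1 - p.2 = x, (tcnt A p) ^ 2

lemma card_filter_prod {α β : Type*} [DecidableEq α] (s : Finset α) (u : Finset β)
    (P : α → β → Prop) [∀ a b, Decidable (P a b)] :
    ((s ×ˢ u).filter fun q => P q.1 q.2).card = ∑ a ∈ s, (u.filter (P a)).card := by
  rw [Finset.card_eq_sum_card_fiberwise (f := fun q => q.1) (t := s)
    (by rintro ⟨x, y⟩ hx; simp only [Finset.mem_coe, Finset.mem_filter, Finset.mem_product] at hx; exact hx.1.1)]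
  refine Finset.sum_congr rfl fun a ha => ?_
  have hset : (((s ×ˢ u).filter fun q => P q.1 q.2).filter fun q => q.1 = a)
      = ((s.filter (· = a)) ×ˢ (u.filter (P a))) := by
    rw [Finset.filter_filter, ← Finset.filter_product]
    apply Finset.filter_congr
    rintro ⟨x, y⟩ hq
    constructor
    · rintro ⟨h1, h2⟩; subst h2; exact ⟨rfl, h1⟩
    · rintro ⟨h1, h2⟩; subst h1; exact ⟨h2, rfl⟩
  rw [hset, Finset.card_product, Finset.filter_eq', if_pos ha, Finset.card_singleton, one_mul]

lemma sum_nrep (A : Finset G) : ∑ x ∈ A - A, nrep A x = A.card ^ 2 := by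
  unfold nrep
  have h := Finset.card_eq_sum_card_fiberwise (f := fun p : G × G => p.1 - p.2)
    (s := A ×ˢ A) (t := A - A)
    (by rintro ⟨a, b⟩ hp; rw [Finset.mem_coe, Finset.mem_product] at hp; exact Finset.sub_mem_sub hp.1 hp.2)
  rw [← h, Finset.card_product, sq]

lemma energy_eq (A B : Finset G) :
    energyAdd A B = ∑ x ∈ A - A, nrep A x * nrep B x := by
  unfold energyAdd nrep
  rw [Finset.card_eq_sum_card_fiberwise (f := fun q => q.1.1 - q.1.2) (t := A - A)
    (by rintro ⟨⟨a, b⟩, ⟨c, d⟩⟩ hp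
        rw [Finset.mem_coe, Finset.mem_filter, Finset.mem_product, Finset.mem_product, Finset.mem_product] at hp
        exact Finset.sub_mem_sub hp.1.1.1 hp.1.1.2)]
  refine Finset.sum_congr rfl fun x hx => ?_
  have hset : ((((A ×ˢ A) ×ˢ (B ×ˢ B)).filter fun q => q.1.1 - q.1.2 = q.2.1 - q.2.2).filter
      fun q => q.1.1 - q.1.2 = x)
      = ((A ×ˢ A).filter fun p => p.1 - p.2 = x) ×ˢ ((B ×ˢ B).filter fun p => p.1 - p.2 = x) := by
    rw [Finset.filter_filter, ← Finset.filter_product]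
    apply Finset.filter_congr
    rintro ⟨⟨a, b⟩, ⟨c, d⟩⟩ hq
    simp only
    constructor
    · rintro ⟨h1, h2⟩; exact ⟨h2, h2 ▸ h1.symm⟩
    · rintro ⟨h1, h2⟩; exact ⟨h1.trans h2.symm, h1⟩
  rw [hset, Finset.card_product]

lemma key_identity (A : Finset G) (x : G) :
    nrep A x * A.card = ∑ p ∈ ((A - A) ×ˢ (A - A)).filter fun p => p.1 - p.2 = x, tcnt A p := by
  classical
  -- RHS as a card
  have hR : (((((A - A) ×ˢ (A - A)) ×ˢ A).filter fun q =>
      q.1.1 - q.1.2 = x ∧ q.2 + q.1.1 ∈ A ∧ q.2 + q.1.2 ∈ A).card)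
      = ∑ p ∈ ((A - A) ×ˢ (A - A)).filter fun p => p.1 - p.2 = x, tcnt A p := by
    rw [card_filter_prod ((A - A) ×ˢ (A - A)) A
      (fun p a => p.1 - p.2 = x ∧ a + p.1 ∈ A ∧ a + p.2 ∈ A), Finset.sum_filter]
    refine Finset.sum_congr rfl fun p hp => ?_
    by_cases h : p.1 - p.2 = x
    · rw [if_pos h]
      unfold tcnt
      congr 1
      apply Finset.filter_congr
      intro a ha
      simp only [h, true_and]
    · rw [if_neg h]
      rw [Finset.card_eq_zero, Finset.filter_eq_empty_iff]
      intro a ha hc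
      exact h hc.1
  rw [← hR]
  -- LHS as a card
  have hL : nrep A x * A.card = (((A ×ˢ A).filter fun p => p.1 - p.2 = x) ×ˢ A).card := by
    rw [Finset.card_product]; rfl
  rw [hL]
  apply Finset.card_bij' (fun q _ => ((q.1.1 - q.2, q.1.2 - q.2), q.2))
    (fun q _ => ((q.2 + q.1.1, q.2 + q.1.2), q.2))
  case hi =>
    rintro ⟨⟨a1, a2⟩, a⟩ hq
    simp only [Finset.mem_product, Finset.mem_filter, Finset.mem_product] at hq ⊢
    obtain ⟨⟨⟨h1, h2⟩, h3⟩, h4⟩ := hq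
    refine ⟨⟨⟨Finset.sub_mem_sub h1 h4, Finset.sub_mem_sub h2 h4⟩, h4⟩, ?_, ?_, ?_⟩
    · simpa using h3
    · simpa using h1
    · simpa using h2
  case hj =>
    rintro ⟨⟨d1, d2⟩, a⟩ hq
    simp only [Finset.mem_filter, Finset.mem_product] at hq ⊢
    obtain ⟨⟨⟨hd1, hd2⟩, ha⟩, hx, h1, h2⟩ := hq
    refine ⟨⟨⟨h1, h2⟩, ?_⟩, ha⟩
    simpa using hx
  case left_inv => rintro ⟨⟨a1, a2⟩, a⟩ hq; simp
  case right_inv => rintro ⟨⟨d1, d2⟩, a⟩ hq; simp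

lemma keyCS (A : Finset G) (x : G) :
    (nrep A x * A.card) ^ 2 ≤ nrep (A - A) x * Tsum A x := by
  rw [key_identity]
  have h := Finset.sum_mul_sq_le_sq_mul_sq
    (((A - A) ×ˢ (A - A)).filter fun p => p.1 - p.2 = x) (fun _ => (1 : ℕ)) (fun p => tcnt A p)
  simp only [one_mul, one_pow, Finset.sum_const, smul_eq_mul, mul_one] at h
  exact h.trans_eq (by rfl)

lemma Tsum_le (A : Finset G) (s : Finset G) :
    ∑ x ∈ s, Tsum A x ≤ cubicEnergy A := by
  classical
  unfold Tsum
  rw [Finset.sum_fiberwise_eq_sum_filter]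
  have h1 : ∑ p ∈ ((A - A) ×ˢ (A - A)).filter (fun p => p.1 - p.2 ∈ s), (tcnt A p) ^ 2
      ≤ ∑ p ∈ (A - A) ×ˢ (A - A), (tcnt A p) ^ 2 :=
    Finset.sum_le_sum_of_subset (Finset.filter_subset _ _)
  refine h1.trans ?_
  -- express the full sum as a card
  have h2 : ∑ p ∈ (A - A) ×ˢ (A - A), (tcnt A p) ^ 2
      = ((((A - A) ×ˢ (A - A)) ×ˢ (A ×ˢ A)).filter fun q =>
          (q.2.1 + q.1.1 ∈ A ∧ q.2.1 + q.1.2 ∈ A) ∧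
          (q.2.2 + q.1.1 ∈ A ∧ q.2.2 + q.1.2 ∈ A)).card := by
    rw [card_filter_prod ((A - A) ×ˢ (A - A)) (A ×ˢ A)
      (fun p r => (r.1 + p.1 ∈ A ∧ r.1 + p.2 ∈ A) ∧ (r.2 + p.1 ∈ A ∧ r.2 + p.2 ∈ A))]
    refine Finset.sum_congr rfl fun p hp => ?_
    rw [Finset.filter_product (fun a => a + p.1 ∈ A ∧ a + p.2 ∈ A)
      (fun a => a + p.1 ∈ A ∧ a + p.2 ∈ A), Finset.card_product]
    unfold tcnt
    ring
  rw [h2]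
  unfold cubicEnergy
  apply Finset.card_le_card_of_injOn
    (fun q => ((q.2.1 + q.1.1, q.2.2 + q.1.1), (q.2.1, q.2.2), (q.2.1 + q.1.2, q.2.2 + q.1.2)))
  · rintro ⟨⟨d1, d2⟩, ⟨a, a'⟩⟩ hq
    simp only [Finset.mem_coe, Finset.mem_filter, Finset.mem_product] at hq ⊢
    obtain ⟨⟨⟨hd1, hd2⟩, ha, ha'⟩, ⟨h1, h2⟩, h3, h4⟩ := hq
    refine ⟨⟨⟨h1, h3⟩, ⟨ha, ha'⟩, h2, h4⟩, ?_, ?_⟩ <;> abel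
  · rintro ⟨⟨d1, d2⟩, ⟨a, a'⟩⟩ h1 ⟨⟨e1, e2⟩, ⟨b, b'⟩⟩ h2 heq
    simp only [Prod.mk.injEq] at heq
    obtain ⟨⟨q1, q2⟩, ⟨q3, q4⟩, q5, q6⟩ := heq
    subst q3; subst q4
    simp only [add_right_cancel_iff, add_left_cancel_iff] at q1 q5
    simp only [Prod.mk.injEq]
    exact ⟨⟨q1, q5⟩, trivial⟩

lemma popular (A : Finset G) (hA : A.Nonempty) :
    A.card ^ 2 ≤ 2 * ∑ x ∈ (A - A).filter (fun x => A.card ^ 2 ≤ 2 * (A - A).card * nrep A x),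
      nrep A x := by
  classical
  have hsum : ∑ x ∈ A - A, nrep A x = A.card ^ 2 := sum_nrep A
  have hD : 0 < (A - A).card := Finset.card_pos.2 (hA.sub hA)
  set D := A - A with hDdef
  set P : G → Prop := fun x => A.card ^ 2 ≤ 2 * D.card * nrep A x with hP
  have hsplit : ∑ x ∈ D.filter P, nrep A x + ∑ x ∈ D.filter (fun x => ¬ P x), nrep A x
      = A.card ^ 2 := by
    rw [Finset.sum_filter_add_sum_filter_not]; exact hsum
  have h1 : 2 * D.card * ∑ x ∈ D.filter (fun x => ¬ P x), nrep A x ≤ D.card * A.card ^ 2 := by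
    rw [Finset.mul_sum]
    calc ∑ x ∈ D.filter (fun x => ¬ P x), 2 * D.card * nrep A x
        ≤ ∑ _x ∈ D.filter (fun x => ¬ P x), A.card ^ 2 := by
          refine Finset.sum_le_sum fun x hx => ?_
          rw [Finset.mem_filter] at hx
          exact Nat.le_of_not_le hx.2
      _ = (D.filter (fun x => ¬ P x)).card * A.card ^ 2 := by
          rw [Finset.sum_const, smul_eq_mul]
      _ ≤ D.card * A.card ^ 2 :=
          Nat.mul_le_mul_right _ (Finset.card_le_card (Finset.filter_subset _ _))
  have h2 : D.card * A.card ^ 2 ≤ D.card * (2 * ∑ x ∈ D.filter P, nrep A x) := by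
    nlinarith [hsplit, h1]
  exact Nat.le_of_mul_le_mul_left h2 hD

end AuxLemmas

theorem energy_with_difference_set_lower :
    ∃ c : ℝ, 0 < c ∧
      ∀ (G : Type) (_ : AddCommGroup G) (_ : DecidableEq G) (A : Finset G),
        A.Nonempty → 0 < cubicEnergy A →
        c * (A.card : ℝ) ^ 8 / (((A - A).card : ℝ) * (cubicEnergy A : ℝ)) ≤
          (energyAdd A (A - A) : ℝ) := by
  refine ⟨1/8, by norm_num, ?_⟩
  intro G iG iDec A hA hE3
  classical
  set D := A - A with hDdef
  set D' := D.filter (fun x => A.card ^ 2 ≤ 2 * D.card * nrep A x) with hD'def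
  set N := (A.card : ℝ) with hNdef
  have hN : 0 < N := by
    simp only [hNdef, Nat.cast_pos, Finset.card_pos]; exact hA
  have hK : 0 < (D.card : ℝ) := by
    simp only [Nat.cast_pos, Finset.card_pos]; exact hA.sub hA
  have hE3' : 0 < (cubicEnergy A : ℝ) := by exact_mod_cast hE3
  -- positivity of nrep on D'
  have hn_pos : ∀ x ∈ D', 0 < (nrep A x : ℝ) := by
    intro x hx
    rw [hD'def, Finset.mem_filter] at hx
    have h := hx.2
    by_contra hc
    push_neg at hc
    have : nrep A x = 0 := by exact_mod_cast le_antisymm (by exact_mod_cast hc) (Nat.zero_le _)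
    rw [this, mul_zero] at h
    have : 0 < A.card ^ 2 := pow_pos (Finset.card_pos.2 hA) 2
    omega
  -- popularity, cast
  have hpop : N ^ 2 ≤ 2 * ∑ x ∈ D', (nrep A x : ℝ) := by
    have h := popular A hA
    rw [hNdef, hD'def, hDdef]
    exact_mod_cast h
  -- popular condition in ℝ
  have hpopc : ∀ x ∈ D', N ^ 2 ≤ 2 * (D.card : ℝ) * (nrep A x : ℝ) := by
    intro x hx
    rw [hD'def, Finset.mem_filter] at hx
    rw [hNdef]
    exact_mod_cast hx.2
  -- key CS per point, cast
  have hCS1 : ∀ x : G, ((nrep A x : ℝ) * N) ^ 2 ≤ (nrep D x : ℝ) * (Tsum A x : ℝ) := by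
    intro x
    rw [hNdef, hDdef]
    exact_mod_cast keyCS A x
  -- energy bound
  have hEnergy : ∑ x ∈ D', (nrep A x : ℝ) * (nrep D x : ℝ) ≤ (energyAdd A D : ℝ) := by
    have h1 : ∑ x ∈ D', nrep A x * nrep D x ≤ ∑ x ∈ D, nrep A x * nrep D x :=
      Finset.sum_le_sum_of_subset (Finset.filter_subset _ _)
    have h2 : energyAdd A D = ∑ x ∈ D, nrep A x * nrep D x := energy_eq A D
    rw [h2]
    exact_mod_cast h1
  have hTle : ∑ x ∈ D', (Tsum A x : ℝ) ≤ (cubicEnergy A : ℝ) := by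
    exact_mod_cast Tsum_le A D'
  -- the two weight functions
  set f : G → ℝ := fun x => Real.sqrt ((nrep A x : ℝ) * (nrep D x : ℝ)) with hfdef
  set g : G → ℝ := fun x => Real.sqrt ((Tsum A x : ℝ) / (nrep A x : ℝ)) with hgdef
  have hpt : ∀ x ∈ D', (nrep A x : ℝ) * N ≤ f x * g x := by
    intro x hx
    have hn := hn_pos x hx
    have h1 : f x * g x = Real.sqrt ((nrep A x : ℝ) * (nrep D x : ℝ) *
        ((Tsum A x : ℝ) / (nrep A x : ℝ))) := by
      rw [hfdef, hgdef, ← Real.sqrt_mul (by positivity)]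
    have h2 : (nrep A x : ℝ) * (nrep D x : ℝ) * ((Tsum A x : ℝ) / (nrep A x : ℝ))
        = (nrep D x : ℝ) * (Tsum A x : ℝ) := by
      field_simp
    rw [h1, h2]
    have h3 : (nrep A x : ℝ) * N = Real.sqrt (((nrep A x : ℝ) * N) ^ 2) := by
      rw [Real.sqrt_sq (by positivity)]
    rw [h3]
    exact Real.sqrt_le_sqrt (hCS1 x)
  -- Cauchy-Schwarz
  have hCS := Finset.sum_mul_sq_le_sq_mul_sq D' f g
  have hf2 : ∑ x ∈ D', f x ^ 2 = ∑ x ∈ D', (nrep A x : ℝ) * (nrep D x : ℝ) := by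
    refine Finset.sum_congr rfl fun x hx => ?_
    rw [hfdef, Real.sq_sqrt (by positivity)]
  have hg2N : (∑ x ∈ D', g x ^ 2) * N ^ 2 ≤ 2 * (D.card : ℝ) * (cubicEnergy A : ℝ) := by
    have hpt2 : ∀ x ∈ D', g x ^ 2 * N ^ 2 ≤ 2 * (D.card : ℝ) * (Tsum A x : ℝ) := by
      intro x hx
      have hn := hn_pos x hx
      have hc := hpopc x hx
      rw [hgdef, Real.sq_sqrt (by positivity)]
      rw [div_mul_eq_mul_div, div_le_iff₀ hn]
      have hT : (0 : ℝ) ≤ (Tsum A x : ℝ) := by positivity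
      nlinarith [mul_le_mul_of_nonneg_left hc hT]
    calc (∑ x ∈ D', g x ^ 2) * N ^ 2 = ∑ x ∈ D', g x ^ 2 * N ^ 2 := by
          rw [Finset.sum_mul]
      _ ≤ ∑ x ∈ D', 2 * (D.card : ℝ) * (Tsum A x : ℝ) := Finset.sum_le_sum hpt2
      _ = 2 * (D.card : ℝ) * ∑ x ∈ D', (Tsum A x : ℝ) := by rw [Finset.mul_sum]
      _ ≤ 2 * (D.card : ℝ) * (cubicEnergy A : ℝ) := by
          apply mul_le_mul_of_nonneg_left hTle (by positivity)
  -- assemble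
  have hlow : N ^ 2 / 2 * N ≤ ∑ x ∈ D', f x * g x := by
    calc N ^ 2 / 2 * N ≤ (∑ x ∈ D', (nrep A x : ℝ)) * N := by
          apply mul_le_mul_of_nonneg_right _ hN.le
          linarith [hpop]
      _ = ∑ x ∈ D', (nrep A x : ℝ) * N := by rw [Finset.sum_mul]
      _ ≤ ∑ x ∈ D', f x * g x := Finset.sum_le_sum hpt
  have hsq : (N ^ 2 / 2 * N) ^ 2 ≤ (∑ x ∈ D', f x ^ 2) * (∑ x ∈ D', g x ^ 2) := by
    refine le_trans (pow_le_pow_left₀ (by positivity) hlow 2) hCS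
  have hg2nonneg : 0 ≤ ∑ x ∈ D', g x ^ 2 := by
    apply Finset.sum_nonneg; intro x hx; positivity
  have hE : (0 : ℝ) ≤ (energyAdd A D : ℝ) := by positivity
  -- combine: (N^3/2)^2 * N^2 ≤ E * (∑g²) * N² ≤ E * 2 K E3
  have hmain : (N ^ 2 / 2 * N) ^ 2 * N ^ 2 ≤
      (energyAdd A D : ℝ) * (2 * (D.card : ℝ) * (cubicEnergy A : ℝ)) := by
    calc (N ^ 2 / 2 * N) ^ 2 * N ^ 2
        ≤ ((∑ x ∈ D', f x ^ 2) * (∑ x ∈ D', g x ^ 2)) * N ^ 2 := by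
          apply mul_le_mul_of_nonneg_right hsq (by positivity)
      _ = (∑ x ∈ D', f x ^ 2) * ((∑ x ∈ D', g x ^ 2) * N ^ 2) := by ring
      _ ≤ (energyAdd A D : ℝ) * (2 * (D.card : ℝ) * (cubicEnergy A : ℝ)) := by
          exact mul_le_mul (by rw [hf2]; exact hEnergy) hg2N
            (mul_nonneg hg2nonneg (sq_nonneg N)) hE
  have hmain' : N ^ 8 / 4 ≤ (energyAdd A D : ℝ) * (2 * (D.card : ℝ) * (cubicEnergy A : ℝ)) := by
    calc N ^ 8 / 4 = (N ^ 2 / 2 * N) ^ 2 * N ^ 2 := by ring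
      _ ≤ _ := hmain
  have h2 : (energyAdd A D : ℝ) * (2 * (D.card : ℝ) * (cubicEnergy A : ℝ))
      = 2 * ((energyAdd A D : ℝ) * ((D.card : ℝ) * (cubicEnergy A : ℝ))) := by ring
  rw [div_le_iff₀ (by positivity)]
  rw [h2] at hmain'
  linarith [hmain']
end

section
/- Let A be a finite set of nonzero reals. For t ≥ 1, let R_t = {r ∈ A:A : r has at least t representations as a/b with a,b ∈ A}. Assuming the Szemerédi–Trotter theorem, |R_t| ≤ C·|A - A|²|A|/t³ for an absolute constant C. -/
open Finset Pointwise

/-- A line in the real plane, as a set of points. -/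
def IsLine (l : Set (ℝ × ℝ)) : Prop :=
  ∃ a b c : ℝ, (a, b) ≠ (0, 0) ∧ l = {p : ℝ × ℝ | a * p.1 + b * p.2 = c}

open scoped Classical in
/-- The number of incidences between a finite point set and a finite set of lines. -/
noncomputable def incidences (P : Finset (ℝ × ℝ)) (L : Finset (Set (ℝ × ℝ))) : ℕ :=
  ((P ×ˢ L).filter fun x => x.1 ∈ x.2).card

/-- Number of representations of the ratio `r` as `a / b` with `a, b ∈ A`,
i.e. the number of pairs `(a, b) ∈ A × A` with `a = r * b`. -/
noncomputable def ratioRep (A : Finset ℝ) (r : ℝ) : ℕ :=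
  ((A ×ˢ A).filter fun p => p.1 = r * p.2).card

/-- The line `x = r y - c` as a subset of the plane. -/
def lineSet (r c : ℝ) : Set (ℝ × ℝ) := {p : ℝ × ℝ | p.1 = r * p.2 - c}

lemma isLine_lineSet (r c : ℝ) : IsLine (lineSet r c) := by
  refine ⟨1, -r, -c, by simp, ?_⟩
  ext p
  simp only [lineSet, Set.mem_setOf_eq]
  constructor <;> intro h <;> linarith

lemma lineSet_inj {r c r' c' : ℝ} (h : lineSet r c = lineSet r' c') : r = r' ∧ c = c' := by
  have h1 : ((-c : ℝ), (0:ℝ)) ∈ lineSet r c := by simp [lineSet]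
  rw [h] at h1
  simp only [lineSet, Set.mem_setOf_eq, mul_zero, zero_sub] at h1
  have hc : c = c' := by linarith
  have h2 : ((r - c : ℝ), (1:ℝ)) ∈ lineSet r c := by
    simp only [lineSet, Set.mem_setOf_eq, mul_one]
  rw [h] at h2
  simp only [lineSet, Set.mem_setOf_eq, mul_one] at h2
  exact ⟨by linarith, hc⟩

open scoped Classical in
lemma ratioRep_eq (A : Finset ℝ) (r : ℝ) :
    ratioRep A r = (A.filter fun b => r * b ∈ A).card := by
  unfold ratioRep
  apply Finset.card_bij (fun (p : ℝ × ℝ) _ => p.2)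
  · intro p hp
    simp only [Finset.mem_filter, Finset.mem_product] at hp ⊢
    exact ⟨hp.1.2, hp.2 ▸ hp.1.1⟩
  · intro p hp q hq hpq
    simp only [Finset.mem_filter] at hp hq
    exact Prod.ext (by rw [hp.2, hq.2, hpq]) hpq
  · intro b hb
    simp only [Finset.mem_filter] at hb
    exact ⟨(r * b, b), by simp [Finset.mem_filter, Finset.mem_product, hb.1, hb.2], rfl⟩


lemma cube_rpow {b : ℝ} (hb : 0 ≤ b) : (b ^ ((2:ℝ)/3)) ^ 3 = b ^ 2 := by
  rw [← Real.rpow_natCast (b ^ ((2:ℝ)/3)) 3, ← Real.rpow_mul hb]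
  norm_num

lemma endgame {C₀ t N a D : ℝ} (hC₀ : 0 < C₀) (ht0 : 0 < t)
    (ha1 : 1 ≤ a) (hN1 : 1 ≤ N) (haD : a ≤ D) (htA : t ≤ a) (hNa2 : N ≤ a ^ 2)
    (hmain : t * (N * a) ≤ C₀ * ((D * a * (N * a)) ^ ((2:ℝ)/3) + D * a + N * a)) :
    N * t ^ 3 ≤ (27 * C₀ ^ 3 + 3 * C₀) * (D ^ 2 * a) := by
  have ha0 : (0:ℝ) < a := lt_of_lt_of_le one_pos ha1
  have hN0 : (0:ℝ) < N := lt_of_lt_of_le one_pos hN1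
  have hD0 : (0:ℝ) < D := lt_of_lt_of_le ha0 haD
  have hC₀3 : (0:ℝ) < C₀ ^ 3 := pow_pos hC₀ 3
  have ht3pos : (0:ℝ) < t ^ 3 := pow_pos ht0 3
  set X : ℝ := (D * a * (N * a)) ^ ((2:ℝ)/3) with hXdef
  have hbase : (0:ℝ) ≤ D * a * (N * a) :=
    mul_nonneg (mul_nonneg hD0.le ha0.le) (mul_nonneg hN0.le ha0.le)
  have hX0 : (0:ℝ) ≤ X := Real.rpow_nonneg hbase _
  have hDa0 : (0:ℝ) ≤ D ^ 2 * a := mul_nonneg (sq_nonneg _) ha0.le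
  have hcases : t * (N * a) ≤ 3 * C₀ * X ∨ t * (N * a) ≤ 3 * C₀ * (D * a) ∨
      t * (N * a) ≤ 3 * C₀ * (N * a) := by
    by_contra hcon
    push_neg at hcon
    obtain ⟨h1, h2, h3⟩ := hcon
    nlinarith [hmain]
  rcases hcases with h | h | h
  · have hcube : X ^ 3 = (D * a * (N * a)) ^ 2 := cube_rpow hbase
    have htNa0 : (0:ℝ) ≤ t * (N * a) :=
      mul_nonneg ht0.le (mul_nonneg hN0.le ha0.le)
    have hc3 : (t * (N * a)) ^ 3 ≤ 27 * C₀ ^ 3 * (D * a * (N * a)) ^ 2 := by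
      calc (t * (N * a)) ^ 3 ≤ (3 * C₀ * X) ^ 3 := pow_le_pow_left₀ htNa0 h 3
        _ = 27 * C₀ ^ 3 * X ^ 3 := by ring
        _ = 27 * C₀ ^ 3 * (D * a * (N * a)) ^ 2 := by rw [hcube]
    have hpos : (0:ℝ) < N ^ 2 * a ^ 3 := mul_pos (pow_pos hN0 2) (pow_pos ha0 3)
    have hkey : (N * t ^ 3) * (N ^ 2 * a ^ 3) ≤
        (27 * C₀ ^ 3 * (D ^ 2 * a)) * (N ^ 2 * a ^ 3) := by
      calc (N * t ^ 3) * (N ^ 2 * a ^ 3) = (t * (N * a)) ^ 3 := by ring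
        _ ≤ 27 * C₀ ^ 3 * (D * a * (N * a)) ^ 2 := hc3
        _ = (27 * C₀ ^ 3 * (D ^ 2 * a)) * (N ^ 2 * a ^ 3) := by ring
    have h4 := le_of_mul_le_mul_right hkey hpos
    nlinarith [hC₀, hDa0]
  · have ht2a2 : t ^ 2 ≤ a ^ 2 := pow_le_pow_left₀ ht0.le htA 2
    have h3C : (0:ℝ) ≤ 3 * C₀ * (D * a) := by positivity
    have h3C2 : (0:ℝ) ≤ 3 * C₀ * a ^ 2 := by positivity
    have hkey : (N * t ^ 3) * a ≤ (3 * C₀ * (D ^ 2 * a)) * a := by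
      calc (N * t ^ 3) * a = (t * (N * a)) * t ^ 2 := by ring
        _ ≤ (3 * C₀ * (D * a)) * t ^ 2 :=
            mul_le_mul_of_nonneg_right h (sq_nonneg _)
        _ ≤ (3 * C₀ * (D * a)) * a ^ 2 := mul_le_mul_of_nonneg_left ht2a2 h3C
        _ = (3 * C₀ * a ^ 2) * (a * D) := by ring
        _ ≤ (3 * C₀ * a ^ 2) * (D * D) :=
            mul_le_mul_of_nonneg_left (mul_le_mul_of_nonneg_right haD hD0.le) h3C2
        _ = (3 * C₀ * (D ^ 2 * a)) * a := by ring
    have h4 := le_of_mul_le_mul_right hkey ha0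
    nlinarith [hC₀3, hDa0]
  · have hNa : (0:ℝ) < N * a := mul_pos hN0 ha0
    have ht3 : t ≤ 3 * C₀ :=
      le_of_mul_le_mul_right (by linarith : t * (N * a) ≤ (3 * C₀) * (N * a)) hNa
    have ht27 : t ^ 3 ≤ 27 * C₀ ^ 3 := by
      calc t ^ 3 ≤ (3 * C₀) ^ 3 := pow_le_pow_left₀ ht0.le ht3 3
        _ = 27 * C₀ ^ 3 := by ring
    have hkey : N * t ^ 3 ≤ a ^ 2 * (27 * C₀ ^ 3) :=
      mul_le_mul hNa2 ht27 ht3pos.le (sq_nonneg _)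
    have haD2 : a ^ 2 ≤ D ^ 2 * a := by nlinarith [haD, ha1, hD0]
    nlinarith [hC₀, hDa0, hkey, haD2]

theorem rich_ratios_bound (C₀ : ℝ) (hC₀ : 0 < C₀)
    (hST : ∀ (P : Finset (ℝ × ℝ)) (L : Finset (Set (ℝ × ℝ))),
      (∀ l ∈ L, IsLine l) →
      (incidences P L : ℝ) ≤
        C₀ * (((P.card : ℝ) * L.card) ^ ((2 : ℝ) / 3) + P.card + L.card)) :
    ∃ C : ℝ, 0 < C ∧
      ∀ (A : Finset ℝ), (0 : ℝ) ∉ A →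
      ∀ t : ℝ, 1 ≤ t →
        (((A / A).filter fun r => t ≤ (ratioRep A r : ℝ)).card : ℝ) ≤
          C * ((A - A).card : ℝ) ^ 2 * (A.card : ℝ) / t ^ 3 := by
  classical
  have hC₀3 : (0:ℝ) < C₀ ^ 3 := pow_pos hC₀ 3
  refine ⟨27 * C₀ ^ 3 + 3 * C₀, by linarith, ?_⟩
  intro A _hA0 t ht
  have ht0 : (0:ℝ) < t := lt_of_lt_of_le one_pos ht
  have ht3pos : (0:ℝ) < t ^ 3 := pow_pos ht0 3
  set Rt := (A / A).filter (fun r => t ≤ (ratioRep A r : ℝ)) with hRtdef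
  rcases Finset.eq_empty_or_nonempty Rt with hRe | hRne
  · rw [hRe]
    simp only [Finset.card_empty, Nat.cast_zero]
    apply div_nonneg _ ht3pos.le
    have h1 : (0:ℝ) ≤ 27 * C₀ ^ 3 + 3 * C₀ := by linarith
    exact mul_nonneg (mul_nonneg h1 (sq_nonneg _)) (Nat.cast_nonneg _)
  obtain ⟨r₀, hr₀⟩ := hRne
  have hAne : A.Nonempty := by
    by_contra hcon
    rw [Finset.not_nonempty_iff_eq_empty] at hcon
    rw [hRtdef, hcon] at hr₀
    simp at hr₀
  obtain ⟨a₀, ha₀⟩ := hAne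
  set a : ℝ := (A.card : ℝ) with hadef
  set D : ℝ := ((A - A).card : ℝ) with hDdef
  set N : ℝ := (Rt.card : ℝ) with hNdef
  have ha1 : (1:ℝ) ≤ a := by
    rw [hadef]
    have : 1 ≤ A.card := Finset.card_pos.mpr ⟨a₀, ha₀⟩
    exact_mod_cast this
  have hN1 : (1:ℝ) ≤ N := by
    rw [hNdef]
    have : 1 ≤ Rt.card := Finset.card_pos.mpr ⟨r₀, hr₀⟩
    exact_mod_cast this
  have haD : a ≤ D := by
    rw [hadef, hDdef]
    have : A.card ≤ (A - A).card := by
      apply Finset.card_le_card_of_injOn (fun x => x - a₀)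
      · intro x hx
        exact Finset.sub_mem_sub hx ha₀
      · intro x _ y _ hxy
        simpa using hxy
    exact_mod_cast this
  have ha0 : (0:ℝ) < a := lt_of_lt_of_le one_pos ha1
  have hN0 : (0:ℝ) < N := lt_of_lt_of_le one_pos hN1
  have hD0 : (0:ℝ) < D := lt_of_lt_of_le ha0 haD
  have htA : t ≤ a := by
    have h1 : t ≤ (ratioRep A r₀ : ℝ) := (Finset.mem_filter.mp hr₀).2
    have h2 : ratioRep A r₀ ≤ A.card := by
      rw [ratioRep_eq]
      exact Finset.card_filter_le _ _
    have h3 : (ratioRep A r₀ : ℝ) ≤ a := by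
      rw [hadef]; exact_mod_cast h2
    linarith
  have hNa2 : N ≤ a ^ 2 := by
    have h1 : Rt.card ≤ (A / A).card := Finset.card_filter_le _ _
    have h2 : (A / A).card ≤ A.card * A.card := Finset.card_div_le
    have h3 : Rt.card ≤ A.card * A.card := le_trans h1 h2
    have h4 : N ≤ ((A.card : ℝ) * A.card) := by
      rw [hNdef]; exact_mod_cast h3
    calc N ≤ ((A.card : ℝ) * A.card) := h4
      _ = a ^ 2 := by rw [← hadef]; ring
  set P : Finset (ℝ × ℝ) := (A - A) ×ˢ A with hPdef
  set L : Finset (Set (ℝ × ℝ)) := (Rt ×ˢ A).image (fun rc => lineSet rc.1 rc.2) with hLdef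
  have hLline : ∀ l ∈ L, IsLine l := by
    intro l hl
    rw [hLdef, Finset.mem_image] at hl
    obtain ⟨rc, _, rfl⟩ := hl
    exact isLine_lineSet _ _
  have hLinjOn : Set.InjOn (fun rc : ℝ × ℝ => lineSet rc.1 rc.2)
      ↑(Rt ×ˢ A : Finset (ℝ × ℝ)) := by
    intro x _ y _ hxy
    obtain ⟨h1, h2⟩ := lineSet_inj hxy
    exact Prod.ext h1 h2
  have hLcard : (L.card : ℝ) = N * a := by
    rw [hLdef, Finset.card_image_of_injOn hLinjOn, Finset.card_product]
    push_cast
    rw [← hNdef, ← hadef]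
  have hPcard : (P.card : ℝ) = D * a := by
    rw [hPdef, Finset.card_product]
    push_cast
    rw [← hDdef, ← hadef]
  have hIncLow : t * (N * a) ≤ (incidences P L : ℝ) := by
    set S := ((Rt ×ˢ A) ×ˢ A).filter (fun x : (ℝ × ℝ) × ℝ => x.1.1 * x.2 ∈ A) with hSdef
    have hS : S.card = ∑ rc ∈ Rt ×ˢ A, (A.filter fun b => rc.1 * b ∈ A).card := by
      rw [hSdef, Finset.card_filter, Finset.sum_product]
      refine Finset.sum_congr rfl fun rc _ => ?_
      rw [Finset.card_filter]
    have hcount : t * (N * a) ≤ (S.card : ℝ) := by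
      have hsum : ∀ rc ∈ Rt ×ˢ A, t ≤ ((A.filter fun b => rc.1 * b ∈ A).card : ℝ) := by
        intro rc hrc
        have h1 : rc.1 ∈ Rt := (Finset.mem_product.mp hrc).1
        have h2 : t ≤ (ratioRep A rc.1 : ℝ) := (Finset.mem_filter.mp h1).2
        rwa [ratioRep_eq] at h2
      calc t * (N * a) = ∑ _rc ∈ Rt ×ˢ A, t := by
            rw [Finset.sum_const, Finset.card_product, nsmul_eq_mul]
            push_cast
            rw [← hNdef, ← hadef]
            ring
        _ ≤ ∑ rc ∈ Rt ×ˢ A, ((A.filter fun b => rc.1 * b ∈ A).card : ℝ) :=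
            Finset.sum_le_sum hsum
        _ = (S.card : ℝ) := by rw [hS]; push_cast; rfl
    have hinj : S.card ≤ incidences P L := by
      unfold incidences
      apply Finset.card_le_card_of_injOn
        (fun x : (ℝ × ℝ) × ℝ => ((x.1.1 * x.2 - x.1.2, x.2), lineSet x.1.1 x.1.2))
      · intro x hx
        rw [hSdef, Finset.mem_coe, Finset.mem_filter, Finset.mem_product] at hx
        obtain ⟨⟨hrc, hb⟩, hmul⟩ := hx
        obtain ⟨hr, hc⟩ := Finset.mem_product.mp hrc
        rw [Finset.mem_coe, Finset.mem_filter, Finset.mem_product]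
        refine ⟨⟨?_, ?_⟩, ?_⟩
        · rw [hPdef, Finset.mem_product]
          exact ⟨Finset.sub_mem_sub hmul hc, hb⟩
        · rw [hLdef, Finset.mem_image]
          exact ⟨x.1, hrc, rfl⟩
        · show (x.1.1 * x.2 - x.1.2, x.2) ∈ lineSet x.1.1 x.1.2
          simp [lineSet]
      · intro x hx y hy hxy
        simp only [Prod.mk.injEq] at hxy
        obtain ⟨⟨-, h2⟩, h3⟩ := hxy
        obtain ⟨hr, hc⟩ := lineSet_inj h3
        exact Prod.ext (Prod.ext hr hc) h2
    calc t * (N * a) ≤ (S.card : ℝ) := hcount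
      _ ≤ (incidences P L : ℝ) := by exact_mod_cast hinj
  have hST' := hST P L hLline
  rw [hPcard, hLcard] at hST'
  have hmain : t * (N * a) ≤ C₀ * ((D * a * (N * a)) ^ ((2:ℝ)/3) + D * a + N * a) :=
    le_trans hIncLow hST'
  rw [le_div_iff₀ ht3pos]
  calc N * t ^ 3 ≤ (27 * C₀ ^ 3 + 3 * C₀) * (D ^ 2 * a) :=
        endgame hC₀ ht0 ha1 hN1 haD htA hNa2 hmain
    _ = (27 * C₀ ^ 3 + 3 * C₀) * D ^ 2 * a := by ring
end

section
/- Let A be a finite set of nonzero reals. Assuming the Szemerédi–Trotter theorem, the multiplicative energy supported on the set R_t of ratios with at least t ≥ 1 representations satisfies ∑_{r ∈ A:A, n(r) ≥ t} n(r)² ≤ C·|A - A|²|A|/t for an absolute constant C. -/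
open Finset Pointwise

theorem energy_on_rich_ratios (C₀ : ℝ) (hC₀ : 0 < C₀) :
    ∃ C : ℝ, 0 < C ∧
      ∀ (A : Finset ℝ), (0 : ℝ) ∉ A →
      (∀ s : ℝ, 1 ≤ s →
        (((A / A).filter fun r => s ≤ (ratioRep A r : ℝ)).card : ℝ) ≤
          C₀ * ((A - A).card : ℝ) ^ 2 * (A.card : ℝ) / s ^ 3) →
      ∀ t : ℝ, 1 ≤ t →
        ∑ r ∈ (A / A).filter fun r => t ≤ (ratioRep A r : ℝ), (ratioRep A r : ℝ) ^ 2 ≤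
          C * ((A - A).card : ℝ) ^ 2 * (A.card : ℝ) / t := by
  refine ⟨8 * C₀, by linarith, ?_⟩
  intro A _h0 hST t ht
  set K : ℝ := ((A - A).card : ℝ) ^ 2 * (A.card : ℝ) with hKdef
  have hK : 0 ≤ K := by positivity
  have hrep : ∀ r : ℝ, (ratioRep A r : ℝ) ≤ (A.card : ℝ) ^ 2 := by
    intro r
    have h1 : ratioRep A r ≤ (A ×ˢ A).card := Finset.card_filter_le _ _
    have h2 : (A ×ˢ A).card = A.card * A.card := Finset.card_product _ _
    have : (ratioRep A r : ℝ) ≤ ((A.card * A.card : ℕ) : ℝ) := by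
      exact_mod_cast h2 ▸ h1
    calc (ratioRep A r : ℝ) ≤ ((A.card * A.card : ℕ) : ℝ) := this
      _ = (A.card : ℝ) ^ 2 := by push_cast; ring
  have aux : ∀ N : ℕ, ∀ s : ℝ, 1 ≤ s → (A.card : ℝ) ^ 2 < 2 ^ N * s →
      ∑ r ∈ (A / A).filter (fun r => s ≤ (ratioRep A r : ℝ)), (ratioRep A r : ℝ) ^ 2
        ≤ 8 * C₀ * K / s := by
    intro N
    induction N with
    | zero =>
      intro s hs hlt
      have hempty : (A / A).filter (fun r => s ≤ (ratioRep A r : ℝ)) = ∅ := by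
        apply Finset.filter_false_of_mem
        intro r _
        push_neg
        calc (ratioRep A r : ℝ) ≤ (A.card : ℝ) ^ 2 := hrep r
          _ < 2 ^ 0 * s := hlt
          _ = s := by ring
      rw [hempty, Finset.sum_empty]
      have hs0 : 0 < s := by linarith
      positivity
    | succ N ih =>
      intro s hs hlt
      have hs0 : 0 < s := by linarith
      -- split the sum
      have hsplit :
          ∑ r ∈ (A / A).filter (fun r => s ≤ (ratioRep A r : ℝ)), (ratioRep A r : ℝ) ^ 2
          = (∑ r ∈ ((A / A).filter (fun r => s ≤ (ratioRep A r : ℝ))).filter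
                (fun r => 2 * s ≤ (ratioRep A r : ℝ)), (ratioRep A r : ℝ) ^ 2)
            + ∑ r ∈ ((A / A).filter (fun r => s ≤ (ratioRep A r : ℝ))).filter
                (fun r => ¬ 2 * s ≤ (ratioRep A r : ℝ)), (ratioRep A r : ℝ) ^ 2 :=
        (Finset.sum_filter_add_sum_filter_not _ _ _).symm
      -- the big part
      have hbigset : ((A / A).filter (fun r => s ≤ (ratioRep A r : ℝ))).filter
            (fun r => 2 * s ≤ (ratioRep A r : ℝ))
          = (A / A).filter (fun r => 2 * s ≤ (ratioRep A r : ℝ)) := by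
        rw [Finset.filter_filter]
        apply Finset.filter_congr
        intro r _
        constructor
        · rintro ⟨_, h⟩; exact h
        · intro h; exact ⟨by linarith, h⟩
      have hbig : ∑ r ∈ ((A / A).filter (fun r => s ≤ (ratioRep A r : ℝ))).filter
            (fun r => 2 * s ≤ (ratioRep A r : ℝ)), (ratioRep A r : ℝ) ^ 2
          ≤ 8 * C₀ * K / (2 * s) := by
        rw [hbigset]
        apply ih (2 * s) (by linarith)
        calc (A.card : ℝ) ^ 2 < 2 ^ (N + 1) * s := hlt
          _ = 2 ^ N * (2 * s) := by ring
      -- the small part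
      have hsmall : ∑ r ∈ ((A / A).filter (fun r => s ≤ (ratioRep A r : ℝ))).filter
            (fun r => ¬ 2 * s ≤ (ratioRep A r : ℝ)), (ratioRep A r : ℝ) ^ 2
          ≤ (((A / A).filter (fun r => s ≤ (ratioRep A r : ℝ))).card : ℝ) * (2 * s) ^ 2 := by
        calc ∑ r ∈ ((A / A).filter (fun r => s ≤ (ratioRep A r : ℝ))).filter
              (fun r => ¬ 2 * s ≤ (ratioRep A r : ℝ)), (ratioRep A r : ℝ) ^ 2
            ≤ ∑ _r ∈ ((A / A).filter (fun r => s ≤ (ratioRep A r : ℝ))).filter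
              (fun r => ¬ 2 * s ≤ (ratioRep A r : ℝ)), (2 * s) ^ 2 := by
              apply Finset.sum_le_sum
              intro r hr
              have h2 : ¬ 2 * s ≤ (ratioRep A r : ℝ) := (Finset.mem_filter.mp hr).2
              have hn : (0 : ℝ) ≤ (ratioRep A r : ℝ) := Nat.cast_nonneg _
              have := not_le.mp h2
              nlinarith
          _ = ((((A / A).filter (fun r => s ≤ (ratioRep A r : ℝ))).filter
              (fun r => ¬ 2 * s ≤ (ratioRep A r : ℝ))).card : ℝ) * (2 * s) ^ 2 := by
              rw [Finset.sum_const, nsmul_eq_mul]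
          _ ≤ (((A / A).filter (fun r => s ≤ (ratioRep A r : ℝ))).card : ℝ) * (2 * s) ^ 2 := by
              have : (((A / A).filter (fun r => s ≤ (ratioRep A r : ℝ))).filter
                  (fun r => ¬ 2 * s ≤ (ratioRep A r : ℝ))).card
                  ≤ ((A / A).filter (fun r => s ≤ (ratioRep A r : ℝ))).card :=
                Finset.card_filter_le _ _
              have h2s : (0:ℝ) ≤ (2*s)^2 := by positivity
              exact mul_le_mul_of_nonneg_right (by exact_mod_cast this) h2s
      have hcard : (((A / A).filter (fun r => s ≤ (ratioRep A r : ℝ))).card : ℝ)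
          ≤ C₀ * K / s ^ 3 := by
        calc (((A / A).filter (fun r => s ≤ (ratioRep A r : ℝ))).card : ℝ)
            ≤ C₀ * ((A - A).card : ℝ) ^ 2 * (A.card : ℝ) / s ^ 3 := hST s hs
          _ = C₀ * K / s ^ 3 := by rw [hKdef]; ring
      have hsmall2 : ∑ r ∈ ((A / A).filter (fun r => s ≤ (ratioRep A r : ℝ))).filter
            (fun r => ¬ 2 * s ≤ (ratioRep A r : ℝ)), (ratioRep A r : ℝ) ^ 2
          ≤ (C₀ * K / s ^ 3) * (2 * s) ^ 2 := by
        refine hsmall.trans ?_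
        have h2s : (0:ℝ) ≤ (2*s)^2 := by positivity
        exact mul_le_mul_of_nonneg_right hcard h2s
      rw [hsplit]
      have heq1 : (C₀ * K / s ^ 3) * (2 * s) ^ 2 = 4 * C₀ * K / s := by
        field_simp; ring
      have heq2 : 8 * C₀ * K / (2 * s) = 4 * C₀ * K / s := by
        rw [div_eq_div_iff (by positivity) hs0.ne']; ring
      have heq3 : (8:ℝ) * C₀ * K / s = 4 * C₀ * K / s + 4 * C₀ * K / s := by
        rw [← add_div]; ring
      rw [heq3]
      have := hsmall2
      rw [heq1] at this
      rw [heq2] at hbig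
      linarith
  obtain ⟨N, hN⟩ : ∃ N : ℕ, (A.card : ℝ) ^ 2 < 2 ^ N * t := by
    refine ⟨A.card ^ 2, ?_⟩
    have h1 : (A.card ^ 2 : ℕ) < 2 ^ (A.card ^ 2) := Nat.lt_two_pow_self
    have h1' : ((A.card : ℝ)) ^ 2 < (2:ℝ) ^ (A.card ^ 2) := by exact_mod_cast h1
    calc ((A.card : ℝ)) ^ 2 < (2:ℝ) ^ (A.card ^ 2) := h1'
      _ = (2:ℝ) ^ (A.card ^ 2) * 1 := by ring
      _ ≤ (2:ℝ) ^ (A.card ^ 2) * t := by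
          apply mul_le_mul_of_nonneg_left ht (by positivity)
  calc ∑ r ∈ (A / A).filter fun r => t ≤ (ratioRep A r : ℝ), (ratioRep A r : ℝ) ^ 2
      ≤ 8 * C₀ * K / t := aux N t ht hN
    _ = 8 * C₀ * ((A - A).card : ℝ) ^ 2 * (A.card : ℝ) / t := by rw [hKdef]; ring
end
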